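/- Let V be a finite-dimensional real inner product space, let e : Fin d → V be a family of vectors, let ω : V →ₗ[ℝ] ℝ be a linear functional, and let F be an invertible d × d real matrix. Define e' : Fin d → V by e' i = ∑ j, F i j • e j. Let G and G' be the Gram matrices of e and e' respectively, and let B and B' be generalized inverses of G and G' respectively. Then ∑ i, (B'.mulVec (fun j => ω (e' j))) i • e' i = ∑ i, (B.mulVec (fun j => ω (e j))) i • e i. -/

import Mathlib

open scoped RealInnerProductSpace

private lemma key_proj {d : ℕ} {V : Type*} [NormedAddCommGroup V] [InnerProductSpace ℝ V]
    [FiniteDimensional ℝ V]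
    (e : Fin d → V) (v : V)
    (G B : Matrix (Fin d) (Fin d) ℝ)
    (hG : ∀ i j, G i j = ⟪e i, e j⟫) (hB : G * B * G = G) :
    ∑ i, (B.mulVec (fun j => ⟪v, e j⟫)) i • e i
      = (Submodule.orthogonalProjection (Submodule.span ℝ (Set.range e)) v : V) := by
  set S := Submodule.span ℝ (Set.range e) with hS
  set c : Fin d → ℝ := fun j => ⟪v, e j⟫ with hc
  set x : V := ∑ i, (B.mulVec c) i • e i with hx
  have hmem : ∀ i, e i ∈ S := fun i => Submodule.subset_span ⟨i, rfl⟩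
  have hxS : x ∈ S := Submodule.sum_mem _ fun i _ => Submodule.smul_mem _ _ (hmem i)
  -- the projection p of v onto S is a linear combination of the e i
  set p : V := (Submodule.orthogonalProjection S v : V) with hp
  have hpS : p ∈ S := (Submodule.orthogonalProjection S v).2
  obtain ⟨y, hy⟩ := (Submodule.mem_span_range_iff_exists_fun ℝ).mp hpS
  have hvp : ∀ j, ⟪v - p, e j⟫ = 0 := fun j =>
    Submodule.starProjection_inner_eq_zero v (e j) (hmem j)
  -- c = G.mulVec y
  have hcG : c = G.mulVec y := by
    funext j
    have h1 : ⟪v, e j⟫ = ⟪p, e j⟫ := by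
      have := hvp j
      rw [inner_sub_left] at this
      linarith
    rw [hc]
    simp only [h1, ← hy, Matrix.mulVec, dotProduct]
    rw [sum_inner]
    refine Finset.sum_congr rfl fun i _ => ?_
    rw [real_inner_smul_left, hG, real_inner_comm]
    ring
  -- ⟪x, e j⟫ = ⟪v, e j⟫
  have hGsym : ∀ i j, G i j = G j i := fun i j => by rw [hG, hG, real_inner_comm]
  have hxc : ∀ j, ⟪x, e j⟫ = c j := by
    intro j
    have h2 : ⟪x, e j⟫ = (G.mulVec (B.mulVec c)) j := by
      rw [hx, sum_inner]
      simp only [Matrix.mulVec, dotProduct]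
      refine Finset.sum_congr rfl fun i _ => ?_
      rw [real_inner_smul_left, ← hG, hGsym i j]
      ring
    have h3 : G.mulVec (B.mulVec c) = c := by
      conv_lhs => rw [hcG]
      rw [Matrix.mulVec_mulVec, Matrix.mulVec_mulVec, hB, ← hcG]
    rw [h2, h3]
  -- conclude x is the orthogonal projection
  have horth : ∀ w ∈ S, ⟪v - x, w⟫ = 0 := by
    intro w hw
    induction hw using Submodule.span_induction with
    | mem w hw =>
      obtain ⟨j, rfl⟩ := hw
      have := hxc j
      rw [inner_sub_left, this, hc]
      ring
    | zero => simp
    | add a b _ _ ha hb => rw [inner_add_right, ha, hb]; ring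
    | smul r a _ ha => rw [inner_smul_right, ha]; ring
  symm
  exact (Submodule.eq_starProjection_of_mem_of_inner_eq_zero hxS horth)

theorem natural_parameter_gradient_invariant_under_invertible_change_of_family
    {d : ℕ} {V : Type*} [NormedAddCommGroup V] [InnerProductSpace ℝ V]
    [FiniteDimensional ℝ V]
    (e : Fin d → V) (ω : V →ₗ[ℝ] ℝ)
    (F : Matrix (Fin d) (Fin d) ℝ) (hF : IsUnit F)
    (e' : Fin d → V) (he' : ∀ i, e' i = ∑ j, F i j • e j)
    (G G' : Matrix (Fin d) (Fin d) ℝ)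
    (hG : ∀ i j, G i j = ⟪e i, e j⟫) (hG' : ∀ i j, G' i j = ⟪e' i, e' j⟫)
    (B B' : Matrix (Fin d) (Fin d) ℝ)
    (hB : G * B * G = G) (hB' : G' * B' * G' = G') :
    ∑ i, (B'.mulVec (fun j => ω (e' j))) i • e' i
      = ∑ i, (B.mulVec (fun j => ω (e j))) i • e i := by
  -- Riesz representative
  obtain ⟨v, hv⟩ : ∃ v : V, ∀ u, ω u = ⟪v, u⟫ := by
    refine ⟨(InnerProductSpace.toDual ℝ V).symm (LinearMap.toContinuousLinearMap ω),
      fun u => ?_⟩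
    rw [← InnerProductSpace.toDual_apply_apply, LinearIsometryEquiv.apply_symm_apply]
    rfl
  simp only [hv]
  rw [key_proj e v G B hG hB, key_proj e' v G' B' hG' hB']
  -- spans are equal
  have hspan : Submodule.span ℝ (Set.range e') = Submodule.span ℝ (Set.range e) := by
    have hFinv := hF
    obtain ⟨U, hU⟩ := hF
    apply le_antisymm
    · rw [Submodule.span_le]
      rintro _ ⟨i, rfl⟩
      rw [he']
      exact Submodule.sum_mem _ fun j _ =>
        Submodule.smul_mem _ _ (Submodule.subset_span ⟨j, rfl⟩)
    · rw [Submodule.span_le]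
      rintro _ ⟨j, rfl⟩
      have : Invertible F := hFinv.invertible
      have hej : e j = ∑ k, (⅟F) j k • e' k := by
        symm
        simp only [he', Finset.smul_sum, smul_smul]
        rw [Finset.sum_comm]
        have h1 : ∀ l, (∑ k, ((⅟F) j k * F k l) • e l) = ((⅟F * F) j l) • e l :=
          fun l => by rw [Matrix.mul_apply, Finset.sum_smul]
        calc ∑ l, ∑ k, ((⅟F) j k * F k l) • e l
            = ∑ l, ((⅟F * F) j l) • e l := Finset.sum_congr rfl fun l _ => h1 l
          _ = e j := by
              simp [invOf_mul_self, Matrix.one_apply, ite_smul, Finset.sum_ite_eq]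
      rw [hej]
      exact Submodule.sum_mem _ fun k _ =>
        Submodule.smul_mem _ _ (Submodule.subset_span ⟨k, rfl⟩)
  rw [hspan]
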